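/- arXiv:1910.09056 — 2 statements merged into one kernel-verified Lean document; each statement's English description precedes it below -/
import Mathlib

section
/- Consider i.i.d. draws z₁, z₂, ... ∼ q, importance weights wₖ = p(zₖ)/q(zₖ), acceptance indicator c, and L = min{k : c(zₖ) = 1}. Assume q(A) = E_{z∼q}[c(z)] > 0 and p(A) = E_{z∼p}[c(z)] > 0. Then E[ ∏_{k=1}^{L-1} wₖ ] = q(A)/p(A). -/
open MeasureTheory ProbabilityTheory
open scoped ENNReal

/-- Expected product of the importance weights of the rejected samples:
for i.i.d. draws `ζ k ∼ q`, weights `w = dp/dq`, acceptance set `A` and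
`L = min {k | ζ k ∈ A}`, one has `E[∏_{k<L} w(ζ k)] = q(A)/p(A)`.
(The product over the empty set, when the first draw is accepted, is `1`.) -/
theorem rejected_weights_product_mean {Z Ω : Type*} [MeasurableSpace Z] [MeasurableSpace Ω]
    (P : Measure Ω) [IsProbabilityMeasure P]
    (μp μq : Measure Z) [IsProbabilityMeasure μp] [IsProbabilityMeasure μq]
    (w : Z → ℝ≥0∞) (hw : Measurable w) (habs : μp = μq.withDensity w)
    (A : Set Z) (hA : MeasurableSet A) (hqA : 0 < μq A) (hpA : 0 < μp A)
    (ζ : ℕ → Ω → Z) (hζ : ∀ k, Measurable (ζ k))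
    (hindep : iIndepFun ζ P)
    (hlaw : ∀ k, P.map (ζ k) = μq) :
    ∫⁻ ω, ∏ k ∈ Finset.range (sInf {k | ζ k ω ∈ A}), w (ζ k ω) ∂P
      = μq A / μp A := by
  classical
  set f : Ω → ℝ≥0∞ := fun ω => ∏ k ∈ Finset.range (sInf {k | ζ k ω ∈ A}), w (ζ k ω) with hf
  -- Key independence lemma: the expectation of a product factorizes
  have prodInt : ∀ (g : ℕ → Z → ℝ≥0∞), (∀ k, Measurable (g k)) → ∀ m : ℕ,
      ∫⁻ ω, ∏ k ∈ Finset.range m, g k (ζ k ω) ∂P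
        = ∏ k ∈ Finset.range m, ∫⁻ z, g k z ∂μq := by
    intro g hg m
    have hF : ∀ k, Measurable (fun ω => g k (ζ k ω)) := fun k => (hg k).comp (hζ k)
    have hFi : iIndepFun (fun k => (g k) ∘ (ζ k)) P :=
      hindep.comp _ hg
    have hmap : ∀ k, ∫⁻ ω, g k (ζ k ω) ∂P = ∫⁻ z, g k z ∂μq := by
      intro k
      rw [← hlaw k, lintegral_map (hg k) (hζ k)]
    induction m with
    | zero => simp
    | succ n ih =>
      rw [Finset.prod_range_succ, ← hmap n, ← ih]
      have hid : IndepFun (∏ j ∈ Finset.range n, (g j) ∘ (ζ j)) ((g n) ∘ (ζ n)) P :=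
        hFi.indepFun_prod_range_succ (fun k => hF k) n
      have hmf : Measurable (∏ j ∈ Finset.range n, (g j) ∘ (ζ j)) := by
        rw [Finset.prod_fn]
        exact Finset.measurable_prod _ fun k _ => hF k
      have := lintegral_mul_eq_lintegral_mul_lintegral_of_indepFun hmf (hF n) hid
      simpa [Finset.prod_apply, Finset.prod_range_succ] using this
  -- the events `L = n`
  set E : ℕ → Set Ω := fun n => (⋂ k ∈ Finset.range n, ζ k ⁻¹' Aᶜ) ∩ ζ n ⁻¹' A with hE
  have hEmeas : ∀ n, MeasurableSet (E n) := fun n =>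
    (MeasurableSet.biInter (Set.to_countable _) fun k _ => (hζ k) hA.compl).inter ((hζ n) hA)
  have hEmem : ∀ n ω, ω ∈ E n ↔ (∀ k < n, ζ k ω ∉ A) ∧ ζ n ω ∈ A := by
    intro n ω
    simp only [hE, Set.mem_inter_iff, Set.mem_iInter, Set.mem_preimage, Set.mem_compl_iff,
      Finset.mem_range]
  have hdisj : Pairwise (Function.onFun Disjoint E) := by
    have key : ∀ n m, n < m → Disjoint (E n) (E m) := by
      intro n m h
      refine Set.disjoint_left.mpr fun ω hn hm => ?_
      exact ((hEmem m ω).1 hm).1 n h ((hEmem n ω).1 hn).2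
    intro n m hnm
    rcases hnm.lt_or_gt with h | h
    · exact key n m h
    · exact (key m n h).symm
  have hUnion : (⋃ n, E n) = {ω | ∃ n, ζ n ω ∈ A} := by
    ext ω
    constructor
    · rintro ⟨-, ⟨n, rfl⟩, hω⟩
      exact ⟨n, ((hEmem n ω).1 hω).2⟩
    · rintro ⟨n, hn⟩
      have hne : {k | ζ k ω ∈ A}.Nonempty := ⟨n, hn⟩
      refine Set.mem_iUnion.2 ⟨sInf {k | ζ k ω ∈ A}, (hEmem _ ω).2 ⟨?_, Nat.sInf_mem hne⟩⟩
      exact fun k hk => Nat.notMem_of_lt_sInf hk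
  -- per-index auxiliary functions
  set G : ℕ → ℕ → Z → ℝ≥0∞ :=
    fun n k => if k = n then Set.indicator A 1 else Set.indicator Aᶜ w with hG
  have hGmeas : ∀ n k, Measurable (G n k) := by
    intro n k
    by_cases h : k = n <;>
      simp only [hG, h, if_pos, if_neg, if_true, reduceIte] <;>
      [exact (measurable_one.indicator hA); exact (hw.indicator hA.compl)]
  -- indicator identity
  have hindid : ∀ n, (E n).indicator f = fun ω => ∏ k ∈ Finset.range (n + 1), G n k (ζ k ω) := by
    intro n
    funext ω
    by_cases hω : ω ∈ E n
    · obtain ⟨h1, h2⟩ := (hEmem n ω).1 hω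
      have hsInf : sInf {k | ζ k ω ∈ A} = n :=
        le_antisymm (Nat.sInf_le h2)
          (le_of_not_gt fun h => h1 _ h (Nat.sInf_mem (⟨n, h2⟩ : {k | ζ k ω ∈ A}.Nonempty)))
      rw [Set.indicator_of_mem hω, hf]
      simp only [hsInf, Finset.prod_range_succ]
      have hGn : G n n (ζ n ω) = 1 := by
        simp [hG, Set.indicator_of_mem h2]
      rw [hGn, mul_one]
      refine Finset.prod_congr rfl fun k hk => ?_
      have hk' := Finset.mem_range.1 hk
      simp only [hG, if_neg (Nat.ne_of_lt hk')]
      exact (Set.indicator_of_mem (Set.mem_compl (h1 k hk')) w).symm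
    · rw [Set.indicator_of_notMem hω]
      by_cases h2 : ζ n ω ∈ A
      · have : ∃ k < n, ζ k ω ∈ A := by
          by_contra hc
          push_neg at hc
          exact hω ((hEmem n ω).2 ⟨fun k hk hkA => (hc k hk).elim hkA, h2⟩)
        obtain ⟨k, hk, hkA⟩ := this
        refine (Finset.prod_eq_zero (Finset.mem_range.2 (Nat.lt_succ_of_lt hk)) ?_).symm
        simp only [hG, if_neg (Nat.ne_of_lt hk)]
        exact Set.indicator_of_notMem (Set.notMem_compl_iff.2 hkA) w
      · refine (Finset.prod_eq_zero (Finset.mem_range.2 (Nat.lt_succ_self n)) ?_).symm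
        simp only [hG, if_pos rfl]
        exact Set.indicator_of_notMem h2 1
  -- value of each term
  have hterm : ∀ n, ∫⁻ ω in E n, f ω ∂P = (μp Aᶜ) ^ n * μq A := by
    intro n
    rw [← lintegral_indicator (hEmeas n), hindid n, prodInt (G n) (hGmeas n) (n + 1),
      Finset.prod_range_succ]
    have h1 : ∫⁻ z, G n n z ∂μq = μq A := by
      simp only [hG, if_pos rfl]
      exact lintegral_indicator_one hA
    have h2 : ∀ k ∈ Finset.range n, ∫⁻ z, G n k z ∂μq = μp Aᶜ := by
      intro k hk
      have hk' := Finset.mem_range.1 hk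
      simp only [hG, Nat.ne_of_lt hk', if_neg, reduceIte]
      rw [lintegral_indicator hA.compl, habs, withDensity_apply w hA.compl]
    rw [h1, Finset.prod_congr rfl h2, Finset.prod_const, Finset.card_range]
  -- the never-accepted event is null
  have hnull : P {ω | ∃ n, ζ n ω ∈ A}ᶜ = 0 := by
    have hbd : ∀ n : ℕ, P {ω | ∃ n, ζ n ω ∈ A}ᶜ ≤ (μq Aᶜ) ^ n := by
      intro n
      have hsub : {ω | ∃ n, ζ n ω ∈ A}ᶜ ⊆ ⋂ k ∈ Finset.range n, ζ k ⁻¹' Aᶜ := by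
        intro ω hω
        simp only [Set.mem_compl_iff, Set.mem_setOf_eq, not_exists] at hω
        exact Set.mem_iInter₂.2 fun k _ => hω k
      have hmeas : MeasurableSet (⋂ k ∈ Finset.range n, ζ k ⁻¹' Aᶜ) :=
        MeasurableSet.biInter (Set.to_countable _) fun k _ => (hζ k) hA.compl
      have hindic : ∀ ω, (⋂ k ∈ Finset.range n, ζ k ⁻¹' Aᶜ).indicator 1 ω
          = ∏ k ∈ Finset.range n, (Aᶜ).indicator (1 : Z → ℝ≥0∞) (ζ k ω) := by
        intro ω
        by_cases hω : ω ∈ ⋂ k ∈ Finset.range n, ζ k ⁻¹' Aᶜ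
        · rw [Set.indicator_of_mem hω]
          refine (Finset.prod_eq_one fun k hk => ?_).symm
          exact Set.indicator_of_mem (Set.mem_iInter₂.1 hω k hk) 1
        · rw [Set.indicator_of_notMem hω]
          obtain ⟨k, hk, hkA⟩ : ∃ k ∈ Finset.range n, ζ k ω ∉ Aᶜ := by
            by_contra hc
            push_neg at hc
            exact hω (Set.mem_iInter₂.2 hc)
          exact (Finset.prod_eq_zero hk (Set.indicator_of_notMem hkA 1)).symm
      have : P (⋂ k ∈ Finset.range n, ζ k ⁻¹' Aᶜ) = (μq Aᶜ) ^ n := by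
        rw [← lintegral_indicator_one hmeas]
        calc ∫⁻ ω, (⋂ k ∈ Finset.range n, ζ k ⁻¹' Aᶜ).indicator 1 ω ∂P
            = ∫⁻ ω, ∏ k ∈ Finset.range n, (Aᶜ).indicator (1 : Z → ℝ≥0∞) (ζ k ω) ∂P := by
              simp_rw [hindic]
          _ = ∏ k ∈ Finset.range n, ∫⁻ z, (Aᶜ).indicator (1 : Z → ℝ≥0∞) z ∂μq :=
              prodInt _ (fun _ => measurable_one.indicator hA.compl) n
          _ = (μq Aᶜ) ^ n := by
              rw [Finset.prod_congr rfl fun k _ => lintegral_indicator_one hA.compl,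
                Finset.prod_const, Finset.card_range]
      calc P {ω | ∃ n, ζ n ω ∈ A}ᶜ ≤ P (⋂ k ∈ Finset.range n, ζ k ⁻¹' Aᶜ) := measure_mono hsub
        _ = (μq Aᶜ) ^ n := this
    have hr : μq Aᶜ < 1 := by
      rw [measure_compl hA (measure_ne_top _ _), measure_univ]
      exact ENNReal.sub_lt_self ENNReal.one_ne_top one_ne_zero hqA.ne'
    have htend : Filter.Tendsto (fun n : ℕ => (μq Aᶜ) ^ n) Filter.atTop (nhds 0) :=
      ENNReal.tendsto_pow_atTop_nhds_zero_of_lt_one hr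
    exact le_antisymm (ge_of_tendsto' htend hbd) (zero_le)
  -- put everything together
  have hUmeas : MeasurableSet (⋃ n, E n) := MeasurableSet.iUnion hEmeas
  have hsplit := lintegral_add_compl f hUmeas (μ := P)
  have hcompl : ∫⁻ ω in (⋃ n, E n)ᶜ, f ω ∂P = 0 := by
    apply setLIntegral_measure_zero
    rw [hUnion]
    exact hnull
  have hmain : ∫⁻ ω, f ω ∂P = ∑' n : ℕ, (μp Aᶜ) ^ n * μq A := by
    rw [← hsplit, hcompl, add_zero, lintegral_iUnion hEmeas hdisj]
    exact tsum_congr hterm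
  rw [hf] at hmain
  rw [hmain, ENNReal.tsum_mul_right, ENNReal.tsum_geometric]
  have hc : 1 - μp Aᶜ = μp A := by
    rw [measure_compl hA (measure_ne_top _ _), measure_univ,
      ENNReal.sub_sub_cancel ENNReal.one_ne_top prob_le_one]
  rw [hc, div_eq_mul_inv, mul_comm]
end

section
/- Under the setup of the rejection sampling loop with i.i.d. proposals zₖ ∼ q, weights wₖ = p(zₖ)/q(zₖ), and stopping time L = min{k : c(zₖ)=1}: define S = E_{z∼q}[ (p(z)/q(z))² · (1 - p(A|z)) ] where p(A|z) = c(z). If S ≥ 1, then E[ (∏_{k=1}^{L-1} wₖ)² ] = ∞, and hence the variance of ∏_{k=1}^{L-1} wₖ is infinite. -/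
open MeasureTheory ProbabilityTheory
open scoped ENNReal

lemma lintegral_prod_range_of_iIndepFun {Ω : Type*} [MeasurableSpace Ω]
    (P : Measure Ω) [IsProbabilityMeasure P]
    (h : ℕ → Ω → ℝ≥0∞) (hmeas : ∀ k, Measurable (h k))
    (hindep : iIndepFun h P) (n : ℕ) :
    ∫⁻ ω, ∏ k ∈ Finset.range n, h k ω ∂P
      = ∏ k ∈ Finset.range n, ∫⁻ ω, h k ω ∂P := by
  induction n with
  | zero => simp
  | succ n ih =>
    rw [Finset.prod_range_succ, ← ih]
    have hind := hindep.indepFun_prod_range_succ hmeas n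
    have hind' : IndepFun (fun a => ∏ i ∈ Finset.range n, h i a) (h n) P := by
      simpa [Finset.prod_fn] using hind
    have := lintegral_mul_eq_lintegral_mul_lintegral_of_indepFun
      (Finset.measurable_prod _ fun k _ => hmeas k) (hmeas n) hind' (μ := P)
    simpa [Finset.prod_apply, Finset.prod_range_succ] using this

/-- If `S = E_{z∼q}[(p(z)/q(z))² (1 - c(z))] ≥ 1`, then the second moment of the
product of rejected importance weights `∏_{k<L} w(ζ k)` is infinite (hence its
variance is infinite). -/
theorem rejected_weights_product_infinite_variance {Z Ω : Type*}
    [MeasurableSpace Z] [MeasurableSpace Ω]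
    (P : Measure Ω) [IsProbabilityMeasure P]
    (μp μq : Measure Z) [IsProbabilityMeasure μp] [IsProbabilityMeasure μq]
    (w : Z → ℝ≥0∞) (hw : Measurable w) (habs : μp = μq.withDensity w)
    (A : Set Z) (hA : MeasurableSet A) (hqA : 0 < μq A) (hpA : 0 < μp A)
    (ζ : ℕ → Ω → Z) (hζ : ∀ k, Measurable (ζ k))
    (hindep : iIndepFun ζ P)
    (hlaw : ∀ k, P.map (ζ k) = μq)
    (hS : 1 ≤ ∫⁻ z in Aᶜ, (w z) ^ 2 ∂μq) :
    ∫⁻ ω, (∏ k ∈ Finset.range (sInf {k | ζ k ω ∈ A}), w (ζ k ω)) ^ 2 ∂P = ∞ := by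
  classical
  set F : Ω → ℝ≥0∞ :=
    fun ω => (∏ k ∈ Finset.range (sInf {k | ζ k ω ∈ A}), w (ζ k ω)) ^ 2 with hF
  -- the event "first acceptance at time n"
  set B : ℕ → Set Ω := fun n => {ω | (∀ k < n, ζ k ω ∉ A) ∧ ζ n ω ∈ A} with hB
  have hBmeas : ∀ n, MeasurableSet (B n) := by
    intro n
    have h1 : MeasurableSet {ω | ∀ k < n, ζ k ω ∉ A} := by
      have : {ω | ∀ k < n, ζ k ω ∉ A} = ⋂ k ∈ Finset.range n, (ζ k) ⁻¹' Aᶜ := by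
        ext ω; simp [Set.mem_iInter]
      rw [this]
      exact MeasurableSet.biInter (Finset.range n).countable_toSet
        fun k _ => (hζ k) hA.compl
    exact h1.inter ((hζ n) hA)
  have hBdisj : Pairwise (Function.onFun Disjoint B) := by
    have key : ∀ m n, m < n → Disjoint (B m) (B n) := by
      intro m n hlt
      refine Set.disjoint_left.2 fun ω hm hn => ?_
      exact hn.1 m hlt hm.2
    intro m n hmn
    rcases hmn.lt_or_gt with hlt | hlt
    · exact key m n hlt
    · exact (key n m hlt).symm
  -- on B n, the stopping time equals n
  have hstop : ∀ n ω, ω ∈ B n → sInf {k | ζ k ω ∈ A} = n := by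
    intro n ω hω
    have hne : n ∈ {k | ζ k ω ∈ A} := hω.2
    have hmem := Nat.sInf_mem ⟨n, hne⟩
    have hle := Nat.sInf_le hne
    rcases lt_or_eq_of_le hle with hl | he
    · exact absurd hmem (hω.1 _ hl)
    · exact he
  -- the per-step factors
  have key : ∀ n, μq A ≤ ∫⁻ ω in B n, F ω ∂P := by
    intro n
    set g : ℕ → Z → ℝ≥0∞ := fun k z =>
      if k < n then (w z) ^ 2 * Aᶜ.indicator 1 z else A.indicator 1 z with hg
    have hgmeas : ∀ k, Measurable (g k) := by
      intro k
      by_cases hk : k < n <;> simp only [hg, hk, if_true, if_false]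
      · exact (hw.pow_const 2).mul (measurable_one.indicator hA.compl)
      · exact measurable_one.indicator hA
    have hHindep : iIndepFun (fun k ω => g k (ζ k ω)) P :=
      hindep.comp g hgmeas
    -- pointwise identity
    have hpt : ∀ ω, (B n).indicator F ω = ∏ k ∈ Finset.range (n + 1), g k (ζ k ω) := by
      intro ω
      by_cases hω : ω ∈ B n
      · simp only [Set.indicator_of_mem hω, hF]
        have : ∀ k ∈ Finset.range (n + 1), g k (ζ k ω) =
            if k < n then (w (ζ k ω)) ^ 2 else 1 := by
          intro k hk
          have hk' := Finset.mem_range.1 hk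
          simp only [hg]
          by_cases hkn : k < n
          · simp [hkn, Set.indicator_of_mem (Set.mem_compl (hω.1 k hkn))]
          · have : k = n := by omega
            simp [hkn, this, Set.indicator_of_mem hω.2]
        rw [hstop n ω hω, Finset.prod_congr rfl this]
        rw [Finset.prod_range_succ, if_neg (lt_irrefl n), mul_one]
        rw [Finset.prod_congr rfl (fun k hk => if_pos (Finset.mem_range.1 hk)),
          ← Finset.prod_pow]
      · rw [Set.indicator_of_notMem hω]
        simp only [hB, Set.mem_setOf_eq, not_and_or, not_forall] at hω
        rcases hω with ⟨k, hk, hkA⟩ | hnA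
        · refine (Finset.prod_eq_zero (Finset.mem_range.2 (by omega : k < n + 1)) ?_).symm
          simp only [hg, if_pos hk]
          simp [Set.indicator_of_notMem (Set.notMem_compl_iff.2 (not_not.1 hkA))]
        · refine (Finset.prod_eq_zero (Finset.mem_range.2 (Nat.lt_succ_self n)) ?_).symm
          simp [hg, Set.indicator_of_notMem hnA]
    have hint : ∫⁻ ω in B n, F ω ∂P
        = ∏ k ∈ Finset.range (n + 1), ∫⁻ ω, g k (ζ k ω) ∂P := by
      rw [← lintegral_indicator (hBmeas n), lintegral_congr hpt]
      exact lintegral_prod_range_of_iIndepFun P _ (fun k => (hgmeas k).comp (hζ k))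
        hHindep (n + 1)
    -- identify each factor
    have hfac : ∀ k, ∫⁻ ω, g k (ζ k ω) ∂P = ∫⁻ z, g k z ∂μq := by
      intro k
      rw [← hlaw k, lintegral_map (hgmeas k) (hζ k)]
    have hfac_lt : ∀ k, k < n → (1 : ℝ≥0∞) ≤ ∫⁻ ω, g k (ζ k ω) ∂P := by
      intro k hk
      rw [hfac k]
      have : ∫⁻ z, g k z ∂μq = ∫⁻ z in Aᶜ, (w z) ^ 2 ∂μq := by
        have : (fun z => g k z) = Aᶜ.indicator (fun z => (w z) ^ 2) := by
          funext z
          simp only [hg, if_pos hk, Set.indicator_apply]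
          by_cases hz : z ∈ Aᶜ <;> simp [hz]
        rw [this, lintegral_indicator hA.compl]
      rw [this]; exact hS
    have hfac_n : ∫⁻ ω, g n (ζ n ω) ∂P = μq A := by
      rw [hfac n]
      simp only [hg, if_neg (lt_irrefl n)]
      exact lintegral_indicator_one hA
    rw [hint, Finset.prod_range_succ, hfac_n]
    calc μq A = 1 * μq A := (one_mul _).symm
    _ ≤ (∏ k ∈ Finset.range n, ∫⁻ ω, g k (ζ k ω) ∂P) * μq A := by
        refine mul_le_mul_left (Finset.one_le_prod' fun k hk => ?_) _
        exact hfac_lt k (Finset.mem_range.1 hk)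
  -- sum up
  have hsum : (⊤ : ℝ≥0∞) ≤ ∫⁻ ω in ⋃ n, B n, F ω ∂P := by
    rw [lintegral_iUnion hBmeas hBdisj]
    calc (⊤ : ℝ≥0∞) = ∑' _ : ℕ, μq A := (ENNReal.tsum_const_eq_top_of_ne_zero hqA.ne').symm
    _ ≤ ∑' n, ∫⁻ ω in B n, F ω ∂P := ENNReal.tsum_le_tsum key
  have hFmeas : ∫⁻ ω in ⋃ n, B n, F ω ∂P ≤ ∫⁻ ω, F ω ∂P :=
    setLIntegral_le_lintegral _ _
  exact top_le_iff.1 (hsum.trans hFmeas)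
end
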